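/- Let n, d be positive integers. For all real n × d matrices X and Y, one has min_{Q ∈ O(n)} ‖X − QY‖_F ≤ ‖√(XᵀX) − √(YᵀY)‖_F ≤ √2 · min_{Q ∈ O(n)} ‖X − QY‖_F, where O(n) is the group of n × n real orthogonal matrices and ‖·‖_F is the Frobenius norm. -/

import Mathlib

open scoped BigOperators
open Matrix

/-- Frobenius norm of a real matrix. -/
noncomputable def mnorm {p q : ℕ} (A : Matrix (Fin p) (Fin q) ℝ) : ℝ :=
  Real.sqrt (∑ i, ∑ j, (A i j) ^ 2)

/-- The positive semidefinite square root `√(XᵀX)` of the Gram matrix. -/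
noncomputable def gramSqrt {n d : ℕ} (X : Matrix (Fin n) (Fin d) ℝ) :
    Matrix (Fin d) (Fin d) ℝ :=
  (Matrix.posSemidef_conjTranspose_mul_self X).1.eigenvectorUnitary.1 *
    diagonal ((↑) ∘ (√·) ∘ (Matrix.posSemidef_conjTranspose_mul_self X).1.eigenvalues) *
    (star (Matrix.posSemidef_conjTranspose_mul_self X).1.eigenvectorUnitary : Matrix (Fin d) (Fin d) ℝ)


open Matrix

namespace DerksenAux

variable {n d m : ℕ}

/-- PSD square root via the spectral decomposition. -/
noncomputable def psqrt {k : ℕ} {N : Matrix (Fin k) (Fin k) ℝ} (hN : N.PosSemidef) :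
    Matrix (Fin k) (Fin k) ℝ :=
  hN.1.eigenvectorUnitary.1 * diagonal ((↑) ∘ (√·) ∘ hN.1.eigenvalues) *
    (star hN.1.eigenvectorUnitary : Matrix (Fin k) (Fin k) ℝ)

lemma psqrt_mul_self {k : ℕ} {N : Matrix (Fin k) (Fin k) ℝ} (hN : N.PosSemidef) :
    psqrt hN * psqrt hN = N := by
  have hU : (star hN.1.eigenvectorUnitary : Matrix (Fin k) (Fin k) ℝ) *
      hN.1.eigenvectorUnitary.1 = 1 := by simp
  unfold psqrt
  conv_rhs => rw [hN.1.spectral_theorem]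
  rw [Unitary.conjStarAlgAut_apply]
  rw [show ∀ (U D1 V : Matrix (Fin k) (Fin k) ℝ), U * D1 * V * (U * D1 * V)
      = U * (D1 * (V * U) * D1) * V from fun _ _ _ => by noncomm_ring, hU, mul_one,
    diagonal_mul_diagonal]
  congr 3
  funext i
  simp [Real.mul_self_sqrt (hN.eigenvalues_nonneg i)]

lemma psqrt_psd {k : ℕ} {N : Matrix (Fin k) (Fin k) ℝ} (hN : N.PosSemidef) :
    (psqrt hN).PosSemidef :=
  (PosSemidef.diagonal (fun i => by simp [Real.sqrt_nonneg])).mul_mul_conjTranspose_same _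

lemma trace_ct_self (A : Matrix (Fin n) (Fin d) ℝ) :
    (Aᴴ * A).trace = ∑ j, ∑ i, (A i j)^2 := by
  simp [Matrix.trace, Matrix.mul_apply, Matrix.conjTranspose_apply, Matrix.diag, sq]

lemma nsq_nonneg (A : Matrix (Fin n) (Fin d) ℝ) : 0 ≤ (Aᴴ * A).trace := by
  rw [trace_ct_self]
  exact Finset.sum_nonneg fun j _ => Finset.sum_nonneg fun i _ => sq_nonneg _

lemma trace_ct_symm (A B : Matrix (Fin n) (Fin d) ℝ) :
    (Bᴴ * A).trace = (Aᴴ * B).trace := by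
  have h : (Bᴴ * A) = (Aᴴ * B)ᴴ := by
    rw [conjTranspose_mul, conjTranspose_conjTranspose]
  rw [h, trace_conjTranspose, star_trivial]

lemma amgm (A B : Matrix (Fin n) (Fin d) ℝ) :
    (Aᴴ * B).trace ≤ ((Aᴴ * A).trace + (Bᴴ * B).trace) / 2 := by
  have h0 := nsq_nonneg (A - B)
  have hexp : ((A - B)ᴴ * (A - B)).trace
      = (Aᴴ*A).trace + (Bᴴ*B).trace - (Aᴴ*B).trace - (Bᴴ*A).trace := by
    simp only [conjTranspose_sub, Matrix.sub_mul, Matrix.mul_sub, trace_sub]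
    ring
  have hsym := trace_ct_symm A B
  linarith

lemma trace_psd_nonneg {M : Matrix (Fin n) (Fin n) ℝ} (hM : M.PosSemidef) :
    0 ≤ M.trace := by
  rw [Matrix.trace]
  refine Finset.sum_nonneg fun i _ => ?_
  have h := hM.dotProduct_mulVec_nonneg (Pi.single i 1)
  simpa using h

lemma trace_mul_psd_nonneg {M N : Matrix (Fin n) (Fin n) ℝ}
    (hM : M.PosSemidef) (hN : N.PosSemidef) : 0 ≤ (M * N).trace := by
  set S := psqrt hN with hSdef
  have hSS : S * S = N := psqrt_mul_self hN
  have hSH : Sᴴ = S := (psqrt_psd hN).1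
  have h1 : (M * N).trace = (S * M * Sᴴ).trace := by
    rw [hSH, ← hSS, ← mul_assoc, trace_mul_comm, ← mul_assoc]
  rw [h1]
  exact trace_psd_nonneg (hM.mul_mul_conjTranspose_same _)

lemma trace_mul_le_of_le_one {C N : Matrix (Fin n) (Fin n) ℝ}
    (hC : C.PosSemidef) (h1 : (1 - C).PosSemidef) (hN : N.PosSemidef) :
    (C * N).trace ≤ N.trace := by
  have h0 := trace_mul_psd_nonneg h1 hN
  have h : ((1 - C) * N).trace = N.trace - (C * N).trace := by
    rw [sub_mul, one_mul, trace_sub]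
  linarith

lemma trace_contraction_mul_le {K N : Matrix (Fin n) (Fin n) ℝ}
    (hN : N.PosSemidef) (hK : (1 - Kᴴ * K).PosSemidef) :
    (K * N).trace ≤ N.trace := by
  set S := psqrt hN with hSdef
  have hSS : S * S = N := psqrt_mul_self hN
  have hSH : Sᴴ = S := (psqrt_psd hN).1
  have h1 : (K * N).trace = (Sᴴ * (K * S)).trace := by
    rw [hSH, ← hSS, ← mul_assoc, trace_mul_comm]
  have h2 := amgm S (K * S)
  have h3 : (Sᴴ * S).trace = N.trace := by rw [hSH, hSS]
  have h4 : ((K * S)ᴴ * (K * S)).trace = ((Kᴴ * K) * N).trace := by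
    rw [conjTranspose_mul]
    rw [show Sᴴ * Kᴴ * (K * S) = Sᴴ * (Kᴴ * K * S) by noncomm_ring]
    rw [trace_mul_comm, show Kᴴ * K * S * Sᴴ = Kᴴ * K * (S * S) by rw [hSH]; noncomm_ring, hSS]
  have h5 : ((Kᴴ * K) * N).trace ≤ N.trace :=
    trace_mul_le_of_le_one (posSemidef_conjTranspose_mul_self K) hK hN
  rw [h1]
  calc (Sᴴ * (K * S)).trace ≤ ((Sᴴ*S).trace + ((K*S)ᴴ*(K*S)).trace)/2 := h2
    _ ≤ (N.trace + N.trace)/2 := by rw [h3, h4]; linarith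
    _ = N.trace := by ring

lemma transfer_contraction (A : Matrix (Fin n) (Fin d) ℝ)
    (h : (1 - Aᴴ * A).PosSemidef) : (1 - A * Aᴴ).PosSemidef := by
  have hAT : (Aᴴ : Matrix (Fin d) (Fin n) ℝ) = Aᵀ := conjTranspose_eq_transpose_of_trivial A
  rw [posSemidef_iff_dotProduct_mulVec]
  constructor
  · exact Matrix.isHermitian_one.sub (Matrix.isHermitian_mul_conjTranspose_self A)
  · intro v
    rw [star_trivial]
    set w : Fin d → ℝ := v ᵥ* A with hw
    have key : v ⬝ᵥ ((A * Aᴴ) *ᵥ v) = w ⬝ᵥ w := by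
      rw [hAT, ← mulVec_mulVec, dotProduct_mulVec, mulVec_transpose]
    have h2 := h.dotProduct_mulVec_nonneg w
    rw [star_trivial] at h2
    have h2' : (A *ᵥ w) ⬝ᵥ (A *ᵥ w) ≤ w ⬝ᵥ w := by
      have e : w ⬝ᵥ ((1 - Aᴴ * A) *ᵥ w) = w ⬝ᵥ w - (A *ᵥ w) ⬝ᵥ (A *ᵥ w) := by
        rw [sub_mulVec, one_mulVec, dotProduct_sub, hAT, ← mulVec_mulVec,
          dotProduct_mulVec, vecMul_transpose]
      rw [e] at h2; linarith
    have heq : w ⬝ᵥ w = v ⬝ᵥ (A *ᵥ w) := by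
      rw [dotProduct_mulVec]
    have hcs : (v ⬝ᵥ (A *ᵥ w))^2 ≤ (v ⬝ᵥ v) * ((A *ᵥ w) ⬝ᵥ (A *ᵥ w)) := by
      have := Finset.sum_mul_sq_le_sq_mul_sq Finset.univ v (A *ᵥ w)
      simpa [dotProduct, sq] using this
    have ha : 0 ≤ w ⬝ᵥ w := Finset.sum_nonneg fun i _ => mul_self_nonneg _
    have hb : 0 ≤ v ⬝ᵥ v := Finset.sum_nonneg fun i _ => mul_self_nonneg _
    have hgoal : w ⬝ᵥ w ≤ v ⬝ᵥ v := by
      rcases eq_or_lt_of_le ha with h0 | h0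
      · linarith
      · nlinarith [hcs, h2', heq]
    have e2 : v ⬝ᵥ ((1 - A * Aᴴ) *ᵥ v) = v ⬝ᵥ v - w ⬝ᵥ w := by
      rw [sub_mulVec, one_mulVec, dotProduct_sub, key]
    rw [e2]
    linarith


variable {m : ℕ} {P : Matrix (Fin m) (Fin m) ℝ}

/-- conjugation of a diagonal matrix by the eigenvector unitary of `hH` -/
noncomputable def cg (hH : P.IsHermitian) (f : Fin m → ℝ) : Matrix (Fin m) (Fin m) ℝ :=
  (hH.eigenvectorUnitary : Matrix (Fin m) (Fin m) ℝ) * diagonal f *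
    (hH.eigenvectorUnitary : Matrix (Fin m) (Fin m) ℝ)ᴴ

lemma cg_UU (hH : P.IsHermitian) :
    (hH.eigenvectorUnitary : Matrix (Fin m) (Fin m) ℝ)ᴴ *
      (hH.eigenvectorUnitary : Matrix (Fin m) (Fin m) ℝ) = 1 := by
  rw [← star_eq_conjTranspose]
  exact mem_unitaryGroup_iff'.mp hH.eigenvectorUnitary.2

lemma cg_UU' (hH : P.IsHermitian) :
    (hH.eigenvectorUnitary : Matrix (Fin m) (Fin m) ℝ) *
      (hH.eigenvectorUnitary : Matrix (Fin m) (Fin m) ℝ)ᴴ = 1 := by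
  rw [← star_eq_conjTranspose]
  exact mem_unitaryGroup_iff.mp hH.eigenvectorUnitary.2

lemma cg_mul (hH : P.IsHermitian) (f g : Fin m → ℝ) :
    cg hH f * cg hH g = cg hH (fun i => f i * g i) := by
  unfold cg
  rw [show ∀ (U D1 D2 V : Matrix (Fin m) (Fin m) ℝ), U * D1 * V * (U * D2 * V)
      = U * (D1 * (V * U) * D2) * V from fun _ _ _ _ => by noncomm_ring]
  rw [cg_UU hH, mul_one, diagonal_mul_diagonal]

lemma cg_spectral (hH : P.IsHermitian) : cg hH hH.eigenvalues = P := by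
  have hco : (RCLike.ofReal ∘ hH.eigenvalues : Fin m → ℝ) = hH.eigenvalues := by
    funext i; simp [Function.comp, RCLike.ofReal_real_eq_id]
  unfold cg
  conv_rhs => rw [hH.spectral_theorem]
  rw [Unitary.conjStarAlgAut_apply, star_eq_conjTranspose, hco]

lemma cg_one (hH : P.IsHermitian) : cg hH (fun _ => 1) = 1 := by
  unfold cg
  rw [show (diagonal (fun _ => (1:ℝ)) : Matrix (Fin m) (Fin m) ℝ) = 1 from diagonal_one]
  rw [mul_one, cg_UU' hH]

lemma cg_sub (hH : P.IsHermitian) (f g : Fin m → ℝ) :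
    cg hH f - cg hH g = cg hH (fun i => f i - g i) := by
  unfold cg
  rw [← Matrix.sub_mul, ← Matrix.mul_sub, diagonal_sub]

lemma cg_hermitian (hH : P.IsHermitian) (f : Fin m → ℝ) : (cg hH f).IsHermitian := by
  unfold Matrix.IsHermitian
  unfold cg
  rw [conjTranspose_mul, conjTranspose_mul, conjTranspose_conjTranspose,
    diagonal_conjTranspose]
  rw [show star f = f from star_trivial f, mul_assoc]

lemma cg_posSemidef (hH : P.IsHermitian) {f : Fin m → ℝ} (hf : ∀ i, 0 ≤ f i) :
    (cg hH f).PosSemidef :=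
  (PosSemidef.diagonal hf).mul_mul_conjTranspose_same _

lemma ctU_cg_U (hH : P.IsHermitian) (f : Fin m → ℝ) :
    (hH.eigenvectorUnitary : Matrix (Fin m) (Fin m) ℝ)ᴴ * cg hH f *
      (hH.eigenvectorUnitary : Matrix (Fin m) (Fin m) ℝ) = diagonal f := by
  unfold cg
  rw [show ∀ (Uc D : Matrix (Fin m) (Fin m) ℝ), Ucᴴ * (Uc * D * Ucᴴ) * Uc
      = (Ucᴴ * Uc) * (D * (Ucᴴ * Uc)) from fun _ _ => by simp only [Matrix.mul_assoc],
    cg_UU hH, one_mul, mul_one]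

/-- spectral pseudo-inverse -/
noncomputable def pinv (hH : P.IsHermitian) : Matrix (Fin m) (Fin m) ℝ :=
  cg hH (fun i => if hH.eigenvalues i = 0 then 0 else (hH.eigenvalues i)⁻¹)

/-- spectral support projection -/
noncomputable def proj (hH : P.IsHermitian) : Matrix (Fin m) (Fin m) ℝ :=
  cg hH (fun i => if hH.eigenvalues i = 0 then 0 else 1)

lemma cg_mul_spectral (hH : P.IsHermitian) (f : Fin m → ℝ) :
    cg hH f * P = cg hH (fun i => f i * hH.eigenvalues i) := by
  have h := cg_mul hH f hH.eigenvalues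
  rw [cg_spectral] at h
  exact h

lemma spectral_mul_cg (hH : P.IsHermitian) (f : Fin m → ℝ) :
    P * cg hH f = cg hH (fun i => hH.eigenvalues i * f i) := by
  have h := cg_mul hH hH.eigenvalues f
  rw [cg_spectral] at h
  exact h

lemma sq_eq_cg (hH : P.IsHermitian) :
    P * P = cg hH (fun i => hH.eigenvalues i * hH.eigenvalues i) := by
  have h := cg_mul hH hH.eigenvalues hH.eigenvalues
  rw [cg_spectral] at h
  exact h

lemma pinv_mul_self (hH : P.IsHermitian) : pinv hH * P = proj hH := by
  rw [pinv, cg_mul_spectral]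
  unfold proj
  refine congrArg (cg hH) (funext fun i => ?_)
  by_cases h : hH.eigenvalues i = 0 <;> simp [h]

lemma self_mul_pinv (hH : P.IsHermitian) : P * pinv hH = proj hH := by
  rw [pinv, spectral_mul_cg]
  unfold proj
  refine congrArg (cg hH) (funext fun i => ?_)
  by_cases h : hH.eigenvalues i = 0 <;> simp [h]

lemma mul_proj (hH : P.IsHermitian) : P * proj hH = P := by
  rw [proj, spectral_mul_cg]
  conv_rhs => rw [← cg_spectral hH]
  refine congrArg (cg hH) (funext fun i => ?_)
  by_cases h : hH.eigenvalues i = 0 <;> simp [h]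

lemma proj_mul (hH : P.IsHermitian) : proj hH * P = P := by
  rw [proj, cg_mul_spectral]
  conv_rhs => rw [← cg_spectral hH]
  refine congrArg (cg hH) (funext fun i => ?_)
  by_cases h : hH.eigenvalues i = 0 <;> simp [h]

lemma pinv_sq_pinv (hH : P.IsHermitian) : pinv hH * (P * P) * pinv hH = proj hH := by
  rw [pinv, sq_eq_cg hH, cg_mul, cg_mul]
  unfold proj
  refine congrArg (cg hH) (funext fun i => ?_)
  by_cases h : hH.eigenvalues i = 0 <;> simp [h]

lemma pinv_hermitian (hH : P.IsHermitian) : (pinv hH).IsHermitian := cg_hermitian hH _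

lemma proj_hermitian (hH : P.IsHermitian) : (proj hH).IsHermitian := cg_hermitian hH _

lemma proj_psd (hH : P.IsHermitian) : (proj hH).PosSemidef := by
  refine cg_posSemidef hH fun i => ?_
  by_cases h : hH.eigenvalues i = 0 <;> simp [h]

lemma one_sub_proj_psd (hH : P.IsHermitian) : (1 - proj hH).PosSemidef := by
  rw [← cg_one hH, proj, cg_sub]
  refine cg_posSemidef hH fun i => ?_
  by_cases h : hH.eigenvalues i = 0 <;> simp [h]


section Wconstruction

variable {n m : ℕ}

lemma mul_proj_eq_self {X : Matrix (Fin n) (Fin m) ℝ} {P : Matrix (Fin m) (Fin m) ℝ}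
    (hH : P.IsHermitian) (hXP : Xᴴ * X = P * P) : X * proj hH = X := by
  have hzero : (X * proj hH - X)ᴴ * (X * proj hH - X) = 0 := by
    have hPP : (P * P) * proj hH = P * P := by
      rw [mul_assoc, mul_proj]
    have hPP' : proj hH * (P * P) = P * P := by
      have := congrArg Matrix.conjTranspose hPP
      rwa [conjTranspose_mul, (proj_hermitian hH).eq, conjTranspose_mul, hH.eq] at this
    have h1 : (X * proj hH)ᴴ = proj hH * Xᴴ := by
      rw [conjTranspose_mul, (proj_hermitian hH).eq]
    rw [conjTranspose_sub, h1, Matrix.sub_mul, Matrix.mul_sub, Matrix.mul_sub]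
    have e1 : proj hH * Xᴴ * (X * proj hH) = P * P := by
      rw [Matrix.mul_assoc, ← Matrix.mul_assoc Xᴴ, hXP, hPP, hPP']
    have e2 : proj hH * Xᴴ * X = P * P := by rw [Matrix.mul_assoc, hXP, hPP']
    have e3 : Xᴴ * (X * proj hH) = P * P := by rw [← Matrix.mul_assoc, hXP, hPP]
    rw [e1, e2, e3, hXP]
    simp
  have := conjTranspose_mul_self_eq_zero.mp hzero
  rwa [sub_eq_zero] at this

lemma W_mul {X : Matrix (Fin n) (Fin m) ℝ} {P : Matrix (Fin m) (Fin m) ℝ}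
    (hH : P.IsHermitian) (hXP : Xᴴ * X = P * P) : (X * pinv hH) * P = X := by
  rw [Matrix.mul_assoc, pinv_mul_self, mul_proj_eq_self hH hXP]

lemma W_gram {X : Matrix (Fin n) (Fin m) ℝ} {P : Matrix (Fin m) (Fin m) ℝ}
    (hH : P.IsHermitian) (hXP : Xᴴ * X = P * P) :
    (X * pinv hH)ᴴ * (X * pinv hH) = proj hH := by
  rw [conjTranspose_mul, (pinv_hermitian hH).eq, Matrix.mul_assoc,
    ← Matrix.mul_assoc Xᴴ, hXP, ← Matrix.mul_assoc, pinv_sq_pinv]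

end Wconstruction

section KeyUpper

variable {n d : ℕ}

lemma key_abstract {P R : Matrix (Fin d) (Fin d) ℝ} (hP : P.PosSemidef) (hR : R.PosSemidef)
    (A B : Matrix (Fin n) (Fin d) ℝ)
    (hA1 : (1 - Aᴴ * A).PosSemidef) (hB1 : (1 - Bᴴ * B).PosSemidef) :
    4 * ((A * P)ᴴ * (B * R)).trace
      ≤ (P * P).trace + (R * R).trace + 2 * (P * R).trace := by
  have hPH : Pᴴ = P := hP.1
  have hRH : Rᴴ = R := hR.1
  set Ph := psqrt hP with hPhdef
  set Rh := psqrt hR with hRhdef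
  have hPh2 : Ph * Ph = P := psqrt_mul_self hP
  have hRh2 : Rh * Rh = R := psqrt_mul_self hR
  have hPhH : Phᴴ = Ph := (psqrt_psd hP).1
  have hRhH : Rhᴴ = Rh := (psqrt_psd hR).1
  have hPPpsd : (P * P).PosSemidef := by
    have := posSemidef_conjTranspose_mul_self P; rwa [hPH] at this
  have hRRpsd : (R * R).PosSemidef := by
    have := posSemidef_conjTranspose_mul_self R; rwa [hRH] at this
  set E := Ph * Aᴴ * B * Rh with hEdef
  set F := Rh * Ph with hFdef
  -- step 0
  have step0 : ((A * P)ᴴ * (B * R)).trace = (E * F).trace := by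
    have h1 : E * F = (Ph * (Aᴴ * (B * R))) * Ph := by
      rw [hEdef, hFdef, ← hRh2]; simp only [Matrix.mul_assoc]
    rw [h1, trace_mul_comm (Ph * (Aᴴ * (B * R))) Ph, conjTranspose_mul, hPH, ← hPh2]
    congr 1
    simp only [Matrix.mul_assoc]
  -- step 1 : AM-GM
  have step1 : (E * F).trace ≤ ((E * Eᴴ).trace + (Fᴴ * F).trace) / 2 := by
    have h := amgm Eᴴ F
    rwa [conjTranspose_conjTranspose] at h
  -- step 2
  have step2 : (Fᴴ * F).trace = (P * R).trace := by
    rw [hFdef, conjTranspose_mul, hPhH, hRhH, trace_mul_comm]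
    rw [show Rh * Ph * (Ph * Rh) = Rh * (Ph * Ph) * Rh by simp only [Matrix.mul_assoc]]
    rw [hPh2, trace_mul_comm]
    rw [show Rh * (Rh * P) = (Rh * Rh) * P by simp only [Matrix.mul_assoc], hRh2,
      trace_mul_comm]
  -- step 3
  have step3 : (E * Eᴴ).trace = ((B * R * Bᴴ) * (A * P * Aᴴ)).trace := by
    have hEH : Eᴴ = Rh * (Bᴴ * (A * Ph)) := by
      rw [hEdef]
      simp only [conjTranspose_mul, conjTranspose_conjTranspose, hPhH, hRhH, Matrix.mul_assoc]
    rw [hEH, hEdef]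
    rw [show Ph * Aᴴ * B * Rh * (Rh * (Bᴴ * (A * Ph)))
        = Ph * (Aᴴ * (B * ((Rh * Rh) * (Bᴴ * (A * Ph))))) by simp only [Matrix.mul_assoc],
      hRh2, trace_mul_comm]
    rw [show Aᴴ * (B * (R * (Bᴴ * (A * Ph)))) * Ph
        = Aᴴ * ((B * R * Bᴴ) * (A * (Ph * Ph))) by simp only [Matrix.mul_assoc], hPh2]
    rw [trace_mul_comm]
    simp only [Matrix.mul_assoc]
  -- step 4 : AM-GM on M2, M1
  have hM1H : (A * P * Aᴴ)ᴴ = A * P * Aᴴ := (hP.mul_mul_conjTranspose_same A).1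
  have hM2H : (B * R * Bᴴ)ᴴ = B * R * Bᴴ := (hR.mul_mul_conjTranspose_same B).1
  have step4 : ((B * R * Bᴴ) * (A * P * Aᴴ)).trace
      ≤ (((B * R * Bᴴ) * (B * R * Bᴴ)).trace + ((A * P * Aᴴ) * (A * P * Aᴴ)).trace) / 2 := by
    have h := amgm (B * R * Bᴴ) (A * P * Aᴴ)
    rwa [hM2H, hM1H] at h
  -- step 5 : tr(M1*M1) ≤ tr(P*P)
  have step5 : ((A * P * Aᴴ) * (A * P * Aᴴ)).trace ≤ (P * P).trace := by
    set K := Aᴴ * A with hKdef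
    have hKpsd : K.PosSemidef := posSemidef_conjTranspose_mul_self A
    have hPKP : (P * K * P).PosSemidef := by
      have := hKpsd.mul_mul_conjTranspose_same P
      rwa [hPH] at this
    have e1 : ((A * P * Aᴴ) * (A * P * Aᴴ)).trace = (K * (P * K * P)).trace := by
      rw [show (A * P * Aᴴ) * (A * P * Aᴴ) = A * ((P * K * P) * Aᴴ) by
        rw [hKdef]; simp only [Matrix.mul_assoc], trace_mul_comm]
      rw [show P * K * P * Aᴴ * A = P * K * P * K by rw [hKdef, Matrix.mul_assoc]]
      rw [trace_mul_comm]
    have e2 : (P * K * P).trace = (K * (P * P)).trace := by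
      rw [trace_mul_comm, ← Matrix.mul_assoc, trace_mul_comm]
    calc ((A * P * Aᴴ) * (A * P * Aᴴ)).trace
        = (K * (P * K * P)).trace := e1
      _ ≤ (P * K * P).trace := trace_mul_le_of_le_one hKpsd hA1 hPKP
      _ = (K * (P * P)).trace := e2
      _ ≤ (P * P).trace := trace_mul_le_of_le_one hKpsd hA1 hPPpsd
  -- step 6 : tr(M2*M2) ≤ tr(R*R)
  have step6 : ((B * R * Bᴴ) * (B * R * Bᴴ)).trace ≤ (R * R).trace := by
    set K := Bᴴ * B with hKdef
    have hKpsd : K.PosSemidef := posSemidef_conjTranspose_mul_self B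
    have hPKP : (R * K * R).PosSemidef := by
      have := hKpsd.mul_mul_conjTranspose_same R
      rwa [hRH] at this
    have e1 : ((B * R * Bᴴ) * (B * R * Bᴴ)).trace = (K * (R * K * R)).trace := by
      rw [show (B * R * Bᴴ) * (B * R * Bᴴ) = B * ((R * K * R) * Bᴴ) by
        rw [hKdef]; simp only [Matrix.mul_assoc], trace_mul_comm]
      rw [show R * K * R * Bᴴ * B = R * K * R * K by rw [hKdef, Matrix.mul_assoc]]
      rw [trace_mul_comm]
    have e2 : (R * K * R).trace = (K * (R * R)).trace := by
      rw [trace_mul_comm, ← Matrix.mul_assoc, trace_mul_comm]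
    calc ((B * R * Bᴴ) * (B * R * Bᴴ)).trace
        = (K * (R * K * R)).trace := e1
      _ ≤ (R * K * R).trace := trace_mul_le_of_le_one hKpsd hB1 hPKP
      _ = (K * (R * R)).trace := e2
      _ ≤ (R * R).trace := trace_mul_le_of_le_one hKpsd hB1 hRRpsd
  rw [step0]
  rw [step3] at step1
  linarith

end KeyUpper

section Polar

variable {n : ℕ}

lemma exists_polar (M : Matrix (Fin n) (Fin n) ℝ) :
    ∃ Q : Matrix (Fin n) (Fin n) ℝ,
      Q ∈ Matrix.orthogonalGroup (Fin n) ℝ ∧ (Q * M).PosSemidef := by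
  classical
  have hG : (Mᴴ * M).PosSemidef := posSemidef_conjTranspose_mul_self M
  set S := psqrt hG with hSdef
  have hS : S.PosSemidef := psqrt_psd hG
  have hH : S.IsHermitian := hS.1
  have hXP : Mᴴ * M = S * S := (psqrt_mul_self hG).symm
  set W := M * pinv hH with hWdef
  have hWS : W * S = M := W_mul hH hXP
  have hWW : Wᴴ * W = proj hH := W_gram hH hXP
  set U : Matrix (Fin n) (Fin n) ℝ :=
    (hH.eigenvectorUnitary : Matrix (Fin n) (Fin n) ℝ) with hUdef
  set lam : Fin n → ℝ := hH.eigenvalues with hlamdef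
  have hUU : Uᴴ * U = 1 := cg_UU hH
  have hUU' : U * Uᴴ = 1 := cg_UU' hH
  have hWU : (W * U)ᴴ * (W * U) = diagonal (fun i => if lam i = 0 then 0 else 1) := by
    rw [conjTranspose_mul,
      show Uᴴ * Wᴴ * (W * U) = Uᴴ * (Wᴴ * W) * U by simp only [Matrix.mul_assoc], hWW]
    exact ctU_cg_U hH _
  set v : Fin n → EuclideanSpace ℝ (Fin n) :=
    fun i => (WithLp.equiv 2 _).symm (fun j => (W * U) j i) with hvdef
  have hinner : ∀ i j, (inner ℝ (v i) (v j) : ℝ) = ((W * U)ᴴ * (W * U)) i j := by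
    intro i j
    rw [PiLp.inner_apply]
    simp only [hvdef, WithLp.equiv_symm_apply, Matrix.mul_apply,
      Matrix.conjTranspose_apply, RCLike.inner_apply, starRingEnd_apply, star_trivial]
    exact Finset.sum_congr rfl fun _ _ => mul_comm _ _
  have horth : Orthonormal ℝ (Set.restrict {i | lam i ≠ 0} v) := by
    rw [orthonormal_iff_ite]
    rintro ⟨i, hi⟩ ⟨j, hj⟩
    have hi' : lam i ≠ 0 := hi
    change inner ℝ (v i) (v j) = _
    rw [hinner, hWU, Matrix.diagonal_apply]
    by_cases h : i = j
    · subst h; simp [hi']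
    · simp [h, Subtype.mk_eq_mk]
  obtain ⟨b, hb⟩ := horth.exists_orthonormalBasis_extension_of_card_eq
    (by simp [finrank_euclideanSpace])
  set V : Matrix (Fin n) (Fin n) ℝ := Matrix.of (fun j i => b i j) with hVdef
  have hVinner : ∀ i j, (Vᴴ * V) i j = (inner ℝ (b i) (b j) : ℝ) := by
    intro i j
    rw [PiLp.inner_apply]
    simp only [hVdef, Matrix.mul_apply, Matrix.conjTranspose_apply, Matrix.of_apply,
      RCLike.inner_apply, starRingEnd_apply, star_trivial]
    exact Finset.sum_congr rfl fun _ _ => mul_comm _ _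
  have hV : Vᴴ * V = 1 := by
    ext i j
    rw [hVinner, orthonormal_iff_ite.mp b.orthonormal i j, Matrix.one_apply]
  have hVV' : V * Vᴴ = 1 := by
    rw [mul_eq_one_comm]
    exact hV
  set Q := U * Vᴴ with hQdef
  have hmem : Q ∈ Matrix.orthogonalGroup (Fin n) ℝ := by
    rw [Matrix.mem_orthogonalGroup_iff, ← conjTranspose_eq_transpose_of_trivial, hQdef, conjTranspose_mul,
      conjTranspose_conjTranspose,
      show U * Vᴴ * (V * Uᴴ) = U * ((Vᴴ * V) * Uᴴ) by simp only [Matrix.mul_assoc],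
      hV, one_mul, hUU']
  have h4 : U * diagonal lam * Uᴴ = S := by
    rw [← cg_spectral hH]; rfl
  have key : Vᴴ * (W * U) * diagonal lam = diagonal lam := by
    ext i j
    rw [Matrix.mul_diagonal, Matrix.diagonal_apply]
    by_cases hj : lam j = 0
    · rw [hj, mul_zero]
      by_cases h : i = j
      · subst h; rw [if_pos rfl, hj]
      · rw [if_neg h]
    · have hbj : b j = v j := hb j hj
      have : (Vᴴ * (W * U)) i j = (inner ℝ (b i) (b j) : ℝ) := by
        rw [hbj, PiLp.inner_apply]
        simp only [hVdef, hvdef, Matrix.mul_apply, Matrix.conjTranspose_apply,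
          Matrix.of_apply, WithLp.equiv_symm_apply, RCLike.inner_apply,
          starRingEnd_apply, star_trivial]
        exact Finset.sum_congr rfl fun _ _ => mul_comm _ _
      rw [this, orthonormal_iff_ite.mp b.orthonormal i j]
      by_cases h : i = j
      · subst h; simp
      · simp [h]
  have hQM : Q * M = S := by
    rw [← hWS, ← h4]
    calc Q * (W * (U * diagonal lam * Uᴴ))
        = U * (Vᴴ * (W * U) * diagonal lam) * Uᴴ := by
          rw [hQdef]; simp only [Matrix.mul_assoc]
      _ = U * diagonal lam * Uᴴ := by rw [key]
  exact ⟨Q, hmem, by rw [hQM]; exact hS⟩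

end Polar

lemma trace_le_polar {n : ℕ} {M Q C : Matrix (Fin n) (Fin n) ℝ}
    (hQ : Q ∈ Matrix.orthogonalGroup (Fin n) ℝ) (hQM : (Q * M).PosSemidef)
    (hC : (1 - Cᴴ * C).PosSemidef) : (C * M).trace ≤ (Q * M).trace := by
  have hQ1 : Qᴴ * Q = 1 := by
    rw [← star_eq_conjTranspose]; exact mem_unitaryGroup_iff'.mp hQ
  have hQ1' : Q * Qᴴ = 1 := by
    rw [← star_eq_conjTranspose]; exact mem_unitaryGroup_iff.mp hQ
  have hK : (1 - (C * Qᴴ)ᴴ * (C * Qᴴ)).PosSemidef := by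
    have h2 : (1 : Matrix (Fin n) (Fin n) ℝ) - Q * (Cᴴ * C) * Qᴴ
        = Q * (1 - Cᴴ * C) * Qᴴ := by
      rw [Matrix.mul_sub, Matrix.sub_mul, Matrix.mul_one, hQ1']
    rw [conjTranspose_mul, conjTranspose_conjTranspose,
      show Q * Cᴴ * (C * Qᴴ) = Q * (Cᴴ * C) * Qᴴ by simp only [Matrix.mul_assoc], h2]
    exact hC.mul_mul_conjTranspose_same Q
  have hCM : C * M = (C * Qᴴ) * (Q * M) := by
    rw [show (C * Qᴴ) * (Q * M) = C * ((Qᴴ * Q) * M) by simp only [Matrix.mul_assoc],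
      hQ1, one_mul]
  rw [hCM]
  exact trace_contraction_mul_le hQM hK

lemma nsq_sub_expand {n d : ℕ} (A B : Matrix (Fin n) (Fin d) ℝ) :
    ((A - B)ᴴ * (A - B)).trace
      = (Aᴴ * A).trace + (Bᴴ * B).trace - 2 * (Aᴴ * B).trace := by
  simp only [conjTranspose_sub, Matrix.sub_mul, Matrix.mul_sub, trace_sub]
  have := trace_ct_symm A B
  linarith

end DerksenAux


namespace DerksenAux

lemma mnorm_eq {p q : ℕ} (A : Matrix (Fin p) (Fin q) ℝ) :
    mnorm A = Real.sqrt ((Aᴴ * A).trace) := by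
  rw [mnorm, trace_ct_self]
  congr 1
  exact Finset.sum_comm

end DerksenAux

open DerksenAux in
/-- Derksen: for all real `n × d` matrices `X, Y`,
`min_{Q ∈ O(n)} ‖X − QY‖_F ≤ ‖√(XᵀX) − √(YᵀY)‖_F ≤ √2 · min_{Q ∈ O(n)} ‖X − QY‖_F`. -/
theorem gramSqrt_biLipschitz
    (n d : ℕ) (hn : 0 < n) (hd : 0 < d) (X Y : Matrix (Fin n) (Fin d) ℝ) :
    (⨅ Q : Matrix.orthogonalGroup (Fin n) ℝ,
        mnorm (X - (Q : Matrix (Fin n) (Fin n) ℝ) * Y)) ≤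
      mnorm (gramSqrt X - gramSqrt Y) ∧
    mnorm (gramSqrt X - gramSqrt Y) ≤
      Real.sqrt 2 * ⨅ Q : Matrix.orthogonalGroup (Fin n) ℝ,
        mnorm (X - (Q : Matrix (Fin n) (Fin n) ℝ) * Y) := by
  classical
  have hNE : Nonempty (Matrix.orthogonalGroup (Fin n) ℝ) := ⟨1⟩
  set P : Matrix (Fin d) (Fin d) ℝ := gramSqrt X with hPdef
  set R : Matrix (Fin d) (Fin d) ℝ := gramSqrt Y with hRdef
  have hP : P.PosSemidef := psqrt_psd (Matrix.posSemidef_conjTranspose_mul_self X)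
  have hR : R.PosSemidef := psqrt_psd (Matrix.posSemidef_conjTranspose_mul_self Y)
  have hPP : P * P = Xᴴ * X := psqrt_mul_self (Matrix.posSemidef_conjTranspose_mul_self X)
  have hRR : R * R = Yᴴ * Y := psqrt_mul_self (Matrix.posSemidef_conjTranspose_mul_self Y)
  have hHP : P.IsHermitian := hP.1
  have hHR : R.IsHermitian := hR.1
  have hnsqPR : ((P - R)ᴴ * (P - R)).trace
      = (P * P).trace + (R * R).trace - 2 * (P * R).trace := by
    rw [nsq_sub_expand P R, hHP.eq, hHR.eq]
  have hexpand : ∀ Qm : Matrix (Fin n) (Fin n) ℝ, Qm ∈ Matrix.orthogonalGroup (Fin n) ℝ →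
      ((X - Qm * Y)ᴴ * (X - Qm * Y)).trace
        = (P * P).trace + (R * R).trace - 2 * (Xᴴ * (Qm * Y)).trace := by
    intro Qm hQm
    have hQ1 : Qmᴴ * Qm = 1 := by
      rw [← star_eq_conjTranspose]; exact mem_unitaryGroup_iff'.mp hQm
    rw [nsq_sub_expand]
    have h1 : ((Qm * Y)ᴴ * (Qm * Y)).trace = (R * R).trace := by
      rw [conjTranspose_mul,
        show Yᴴ * Qmᴴ * (Qm * Y) = Yᴴ * ((Qmᴴ * Qm) * Y) by simp only [Matrix.mul_assoc],
        hQ1, Matrix.one_mul, hRR]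
    rw [h1, ← hPP]
  -- upper bound, pointwise
  have keyUpper : ∀ Qm : Matrix (Fin n) (Fin n) ℝ, Qm ∈ Matrix.orthogonalGroup (Fin n) ℝ →
      4 * (Xᴴ * (Qm * Y)).trace
        ≤ (P * P).trace + (R * R).trace + 2 * (P * R).trace := by
    intro Qm hQm
    have hQ1 : Qmᴴ * Qm = 1 := by
      rw [← star_eq_conjTranspose]; exact mem_unitaryGroup_iff'.mp hQm
    set A := X * pinv hHP with hAdef
    set B := Qm * (Y * pinv hHR) with hBdef
    have hA : A * P = X := W_mul hHP hPP.symm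
    have hBR : B * R = Qm * Y := by
      rw [hBdef, Matrix.mul_assoc, W_mul hHR hRR.symm]
    have hA1 : (1 - Aᴴ * A).PosSemidef := by
      rw [hAdef, W_gram hHP hPP.symm]; exact one_sub_proj_psd hHP
    have hB1 : (1 - Bᴴ * B).PosSemidef := by
      have e : Bᴴ * B = (Y * pinv hHR)ᴴ * (Y * pinv hHR) := by
        rw [hBdef, conjTranspose_mul,
          show (Y * pinv hHR)ᴴ * Qmᴴ * (Qm * (Y * pinv hHR))
              = (Y * pinv hHR)ᴴ * ((Qmᴴ * Qm) * (Y * pinv hHR)) by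
            simp only [Matrix.mul_assoc],
          hQ1, Matrix.one_mul]
      rw [e, W_gram hHR hRR.symm]; exact one_sub_proj_psd hHR
    have h := key_abstract hP hR A B hA1 hB1
    rwa [hA, hBR] at h
  -- lower bound : a good orthogonal matrix
  have keyLower : ∃ Qm, Qm ∈ Matrix.orthogonalGroup (Fin n) ℝ ∧
      (P * R).trace ≤ (Xᴴ * (Qm * Y)).trace := by
    obtain ⟨Q0, hQ0, hpsd⟩ := exists_polar (Y * Xᴴ)
    set WX := X * pinv hHP with hWXdef
    set WY := Y * pinv hHR with hWYdef
    set C := WX * WYᴴ with hCdef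
    have hWXP : WX * P = X := W_mul hHP hPP.symm
    have hWYR : WY * R = Y := W_mul hHR hRR.symm
    have hgX : WXᴴ * WX = proj hHP := W_gram hHP hPP.symm
    have hgY : WYᴴ * WY = proj hHR := W_gram hHR hRR.symm
    have hC1 : (1 - Cᴴ * C).PosSemidef := by
      have e : Cᴴ * C = WY * (WXᴴ * WX) * WYᴴ := by
        rw [hCdef, conjTranspose_mul, conjTranspose_conjTranspose]
        simp only [Matrix.mul_assoc]
      have esplit : (1 : Matrix (Fin n) (Fin n) ℝ) - WY * proj hHP * WYᴴ
          = (1 - WY * WYᴴ) + WY * (1 - proj hHP) * WYᴴ := by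
        rw [Matrix.mul_sub, Matrix.sub_mul, Matrix.mul_one]
        abel
      rw [e, hgX, esplit]
      refine Matrix.PosSemidef.add ?_ ?_
      · apply transfer_contraction
        rw [hgY]; exact one_sub_proj_psd hHR
      · exact (one_sub_proj_psd hHP).mul_mul_conjTranspose_same WY
    have hXct : Xᴴ = P * WXᴴ := by
      rw [← hWXP, conjTranspose_mul, hHP.eq]
    have hCM : C * (Y * Xᴴ) = WX * (R * (P * WXᴴ)) := by
      calc C * (Y * Xᴴ) = WX * ((WYᴴ * WY) * (R * (P * WXᴴ))) := by
            conv_lhs => rw [← hWYR, hXct]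
            rw [hCdef]
            simp only [Matrix.mul_assoc]
        _ = WX * (R * (P * WXᴴ)) := by
            rw [hgY,
              show proj hHR * (R * (P * WXᴴ)) = (proj hHR * R) * (P * WXᴴ) from
                (Matrix.mul_assoc _ _ _).symm,
              proj_mul hHR]
    have htrC : (C * (Y * Xᴴ)).trace = (P * R).trace := by
      rw [hCM, trace_mul_comm,
        show R * (P * WXᴴ) * WX = R * (P * (WXᴴ * WX)) by simp only [Matrix.mul_assoc],
        hgX, mul_proj hHP, trace_mul_comm]
    have hcmp := trace_le_polar hQ0 hpsd hC1
    have ht2 : (Xᴴ * (Q0 * Y)).trace = (Q0 * (Y * Xᴴ)).trace := by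
      rw [trace_mul_comm, Matrix.mul_assoc]
    exact ⟨Q0, hQ0, by rw [ht2, ← htrC]; exact hcmp⟩
  -- wrap up
  have hbdd : BddBelow (Set.range fun Q : Matrix.orthogonalGroup (Fin n) ℝ =>
      mnorm (X - (Q : Matrix (Fin n) (Fin n) ℝ) * Y)) := by
    refine ⟨0, fun x hx => ?_⟩
    obtain ⟨Q, rfl⟩ := hx
    exact Real.sqrt_nonneg _
  constructor
  · -- lower bound
    obtain ⟨Q0, hQ0, ht⟩ := keyLower
    have hle : mnorm (X - Q0 * Y) ≤ mnorm (P - R) := by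
      rw [mnorm_eq, mnorm_eq, hexpand Q0 hQ0, hnsqPR]
      apply Real.sqrt_le_sqrt
      linarith
    have hInf : (⨅ Q : Matrix.orthogonalGroup (Fin n) ℝ,
        mnorm (X - (Q : Matrix (Fin n) (Fin n) ℝ) * Y)) ≤ mnorm (X - Q0 * Y) :=
      ciInf_le hbdd (⟨Q0, hQ0⟩ : Matrix.orthogonalGroup (Fin n) ℝ)
    exact hInf.trans hle
  · -- upper bound
    have hpt : ∀ Q : Matrix.orthogonalGroup (Fin n) ℝ,
        mnorm (P - R) ≤ Real.sqrt 2 * mnorm (X - (Q : Matrix (Fin n) (Fin n) ℝ) * Y) := by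
      intro Q
      have h4 := keyUpper (Q : Matrix (Fin n) (Fin n) ℝ) Q.2
      rw [mnorm_eq, mnorm_eq, hnsqPR, hexpand (Q : Matrix (Fin n) (Fin n) ℝ) Q.2,
        ← Real.sqrt_mul (by norm_num : (0:ℝ) ≤ 2)]
      apply Real.sqrt_le_sqrt
      linarith
    have hpos : (0:ℝ) < Real.sqrt 2 := by positivity
    have hlb : mnorm (P - R) / Real.sqrt 2
        ≤ ⨅ Q : Matrix.orthogonalGroup (Fin n) ℝ,
            mnorm (X - (Q : Matrix (Fin n) (Fin n) ℝ) * Y) := by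
      refine le_ciInf fun Q => ?_
      rw [div_le_iff₀ hpos]
      have := hpt Q
      nlinarith [this]
    calc mnorm (P - R) = Real.sqrt 2 * (mnorm (P - R) / Real.sqrt 2) := by
          field_simp
      _ ≤ Real.sqrt 2 * ⨅ Q : Matrix.orthogonalGroup (Fin n) ℝ,
            mnorm (X - (Q : Matrix (Fin n) (Fin n) ℝ) * Y) :=
          mul_le_mul_of_nonneg_left hlb (Real.sqrt_nonneg 2)
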